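/- (Douglas' majorization and factorization theorem) Let H1, H2, H3 be real Hilbert spaces and let A : H1 → H3 and B : H2 → H3 be continuous linear maps. The following are equivalent: (i) range(A) ⊆ range(B); (ii) there exists a constant C > 0 such that ‖A* z‖ ≤ C ‖B* z‖ for all z ∈ H3, where A*, B* denote the Hilbert adjoints; (iii) there exists a continuous linear map C₀ : H1 → H2 such that A = B ∘ C₀. -/

import Mathlib

open ContinuousLinearMap
open scoped InnerProductSpace

set_option maxHeartbeats 2000000 in
/-- Douglas' majorization and factorization theorem. -/
theorem douglas_majorization_factorization
    {H1 H2 H3 : Type*}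
    [NormedAddCommGroup H1] [InnerProductSpace ℝ H1] [CompleteSpace H1]
    [NormedAddCommGroup H2] [InnerProductSpace ℝ H2] [CompleteSpace H2]
    [NormedAddCommGroup H3] [InnerProductSpace ℝ H3] [CompleteSpace H3]
    (A : H1 →L[ℝ] H3) (B : H2 →L[ℝ] H3) :
    [ Set.range A ⊆ Set.range B,
      ∃ C : ℝ, 0 < C ∧ ∀ z : H3, ‖adjoint A z‖ ≤ C * ‖adjoint B z‖,
      ∃ C₀ : H1 →L[ℝ] H2, ∀ h1 : H1, A h1 = B (C₀ h1) ].TFAE := by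
  classical
  tfae_have 1 → 3
  | h1 => by
    set K : Submodule ℝ H2 := (B.ker)ᗮ with hKdef
    haveI : CompleteSpace (B.ker) :=
      (ContinuousLinearMap.isClosed_ker B).completeSpace_coe
    haveI : CompleteSpace K := (B.ker).isClosed_orthogonal.completeSpace_coe
    have hexu : ∀ x : H1, ∃! y : H2, y ∈ K ∧ B y = A x := by
      intro x
      obtain ⟨z, hz⟩ := h1 ⟨x, rfl⟩
      refine ⟨(K.orthogonalProjectionOnto z : H2), ⟨(K.orthogonalProjectionOnto z).2, ?_⟩, ?_⟩
      · have hmem : z - K.orthogonalProjectionOnto z ∈ Kᗮ :=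
          Submodule.sub_starProjection_mem_orthogonal (K := K) z
        have hmem' : z - (K.orthogonalProjectionOnto z : H2) ∈ B.ker :=
          (le_of_eq (Submodule.orthogonal_orthogonal (B.ker))) hmem
        have : B (z - K.orthogonalProjectionOnto z) = 0 := hmem'
        have hB : B z = B (K.orthogonalProjectionOnto z) := by
          have := this
          rw [map_sub, sub_eq_zero] at this
          exact this
        rw [← hB, hz]
      · rintro y ⟨hyK, hyB⟩
        have hd : y - (K.orthogonalProjectionOnto z : H2) ∈ K := K.sub_mem hyK (K.orthogonalProjectionOnto z).2
        have hdk : y - (K.orthogonalProjectionOnto z : H2) ∈ B.ker := by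
          have hmem : z - K.orthogonalProjectionOnto z ∈ Kᗮ :=
            Submodule.sub_starProjection_mem_orthogonal (K := K) z
          have h0 : B (z - (K.orthogonalProjectionOnto z : H2)) = 0 :=
            (le_of_eq (Submodule.orthogonal_orthogonal (B.ker))) hmem
          rw [map_sub, sub_eq_zero] at h0
          simp only [LinearMap.mem_ker, ContinuousLinearMap.coe_coe, map_sub, hyB, ← h0, hz, sub_self]
        have : y - (K.orthogonalProjectionOnto z : H2) = 0 :=
          inner_self_eq_zero.1 ((Submodule.mem_orthogonal (B.ker) _).1 hd _ hdk)
        exact sub_eq_zero.1 this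
    set f : H1 → H2 := fun x => (hexu x).choose with hfdef
    have hf : ∀ x, f x ∈ K ∧ B (f x) = A x := fun x => (hexu x).choose_spec.1
    have huniq : ∀ x y, y ∈ K → B y = A x → y = f x := fun x y hy hBy =>
      (hexu x).unique ⟨hy, hBy⟩ (hf x)
    let flin : H1 →ₗ[ℝ] H2 :=
      { toFun := f
        map_add' := fun x x' => by
          refine ((huniq (x + x') (f x + f x') (K.add_mem (hf x).1 (hf x').1) ?_)).symm
          rw [map_add, (hf x).2, (hf x').2, map_add]
        map_smul' := fun c x => by
          refine ((huniq (c • x) (c • f x) (K.smul_mem c (hf x).1) ?_)).symm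
          rw [map_smul, (hf x).2, map_smul] }
    have hgraph : (flin.graph : Set (H1 × H2)) = {p : H1 × H2 | p.2 ∈ K ∧ B p.2 = A p.1} := by
      ext p
      simp only [SetLike.mem_coe, LinearMap.mem_graph_iff, Set.mem_setOf_eq]
      constructor
      · rintro h
        rw [h]
        exact ⟨(hf p.1).1, (hf p.1).2⟩
      · rintro ⟨h1, h2⟩
        exact huniq p.1 p.2 h1 h2
    have hclosed : IsClosed (flin.graph : Set (H1 × H2)) := by
      rw [hgraph]
      have h1 : IsClosed {p : H1 × H2 | p.2 ∈ K} :=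
        (B.ker).isClosed_orthogonal.preimage continuous_snd
      have h2 : IsClosed {p : H1 × H2 | B p.2 = A p.1} :=
        isClosed_eq (B.continuous.comp continuous_snd) (A.continuous.comp continuous_fst)
      exact h1.inter h2
    exact ⟨⟨flin, flin.continuous_of_isClosed_graph hclosed⟩,
      fun x => ((hf x).2).symm⟩
  tfae_have 3 → 2
  | ⟨C₀, hC₀⟩ => by
    refine ⟨‖adjoint C₀‖ + 1, by positivity, fun z => ?_⟩
    have hA : A = B.comp C₀ := by ext x; exact hC₀ x
    have hadj : adjoint A = (adjoint C₀).comp (adjoint B) := by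
      rw [hA, adjoint_comp]
    calc ‖adjoint A z‖ = ‖adjoint C₀ (adjoint B z)‖ := by rw [hadj]; rfl
      _ ≤ ‖adjoint C₀‖ * ‖adjoint B z‖ := (adjoint C₀).le_opNorm _
      _ ≤ (‖adjoint C₀‖ + 1) * ‖adjoint B z‖ :=
        mul_le_mul_of_nonneg_right (by linarith) (norm_nonneg _)
  tfae_have 2 → 1
  | ⟨C, hC, hle⟩ => by
    rintro w ⟨x, rfl⟩
    set T : H3 →ₗ[ℝ] H2 := (adjoint B : H3 →L[ℝ] H2).toLinearMap with hTdef
    set g : H3 →L[ℝ] ℝ := (innerSL ℝ x).comp (adjoint A) with hgdef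
    have hker : LinearMap.ker T ≤ LinearMap.ker (g : H3 →ₗ[ℝ] ℝ) := by
      intro z hz
      have hz' : adjoint B z = 0 := hz
      have h0 : ‖adjoint A z‖ ≤ 0 := by
        have := hle z
        rwa [hz', norm_zero, mul_zero] at this
      have : adjoint A z = 0 := norm_le_zero_iff.1 h0
      show g z = 0
      simp [hgdef, this]
    let Lbar : (H3 ⧸ LinearMap.ker T) →ₗ[ℝ] ℝ :=
      Submodule.liftQ (LinearMap.ker T) (g : H3 →ₗ[ℝ] ℝ) hker
    let L : ↥(LinearMap.range T) →ₗ[ℝ] ℝ :=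
      Lbar.comp T.quotKerEquivRange.symm.toLinearMap
    have hLapp : ∀ z : H3, L ⟨T z, LinearMap.mem_range_self T z⟩ = g z := by
      intro z
      show Lbar (T.quotKerEquivRange.symm ⟨T z, LinearMap.mem_range_self T z⟩) = g z
      rw [LinearMap.quotKerEquivRange_symm_apply_image]
      rfl
    have hbound : ∀ u : ↥(LinearMap.range T), ‖L u‖ ≤ (C * ‖x‖) * ‖u‖ := by
      rintro ⟨u, hu⟩
      obtain ⟨z, rfl⟩ := hu
      rw [hLapp z]
      have h1 : ‖g z‖ ≤ ‖x‖ * ‖adjoint A z‖ := by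
        simp only [hgdef, ContinuousLinearMap.comp_apply, innerSL_apply_apply, Real.norm_eq_abs]
        exact abs_real_inner_le_norm _ _
      have h2 : ‖adjoint A z‖ ≤ C * ‖adjoint B z‖ := hle z
      have h3 : ‖(⟨T z, LinearMap.mem_range_self T z⟩ : ↥(LinearMap.range T))‖ = ‖adjoint B z‖ := rfl
      rw [h3]
      calc ‖g z‖ ≤ ‖x‖ * ‖adjoint A z‖ := h1
        _ ≤ ‖x‖ * (C * ‖adjoint B z‖) := mul_le_mul_of_nonneg_left h2 (norm_nonneg x)
        _ = (C * ‖x‖) * ‖adjoint B z‖ := by ring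
    let Lc : ↥(LinearMap.range T) →L[ℝ] ℝ := L.mkContinuous (C * ‖x‖) hbound
    obtain ⟨G, hG, -⟩ := exists_extension_norm_eq (LinearMap.range T) Lc
    refine ⟨(InnerProductSpace.toDual ℝ H2).symm G, ?_⟩
    refine ext_inner_right ℝ fun z => ?_
    have key : ⟪((InnerProductSpace.toDual ℝ H2).symm G : H2), adjoint B z⟫_ℝ = g z := by
      rw [InnerProductSpace.toDual_symm_apply]
      have := hG ⟨adjoint B z, LinearMap.mem_range_self T z⟩
      rw [this]
      exact hLapp z
    calc ⟪B ((InnerProductSpace.toDual ℝ H2).symm G), z⟫_ℝ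
        = ⟪((InnerProductSpace.toDual ℝ H2).symm G : H2), adjoint B z⟫_ℝ :=
          (adjoint_inner_right B _ _).symm
      _ = g z := key
      _ = ⟪x, adjoint A z⟫_ℝ := by simp [hgdef]
      _ = ⟪A x, z⟫_ℝ := adjoint_inner_right A x z
  tfae_finish
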